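/- Let X be a metric space, G ⊆ X an open set, and for each n let Z_n be a maximal (1/2^n)-sparse subset of O_n := G ∩ N_{1/2^n}(B) \ (Z_0 ∪ … ∪ Z_{n−1}), where B = cl(G) \ G is assumed non-empty and N_ε(B) denotes the ε-neighbourhood of B. Then G ∩ d(⋃_{n<ω} Z_n) = ∅. -/

import Mathlib

/-- If `Z n` is a maximal `(1/2^n)`-sparse subset of
`O n = G ∩ N_{1/2^n}(B) \ (Z 0 ∪ ⋯ ∪ Z (n-1))`, where `B = cl G \ G ≠ ∅`,
then `G ∩ d(⋃ n, Z n) = ∅`. -/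
theorem stmt_5 {X : Type*} [MetricSpace X] {G : Set X} (hG : IsOpen G)
    {B : Set X} (hB : B = closure G \ G) (hBne : B.Nonempty)
    (Z O : ℕ → Set X)
    (hO : ∀ n, O n = (G ∩ {x | ∃ b ∈ B, dist x b < 1 / 2 ^ n}) \ ⋃ m < n, Z m)
    (hZsub : ∀ n, Z n ⊆ O n)
    (hZsparse : ∀ n, ∀ x ∈ Z n, ∀ y ∈ Z n, x ≠ y → 1 / 2 ^ n ≤ dist x y)
    (hZmax : ∀ n, ∀ x ∈ O n, x ∉ Z n → ∃ z ∈ Z n, dist x z < 1 / 2 ^ n) :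
    G ∩ derivedSet (⋃ n, Z n) = ∅ := by
  ext x
  simp only [Set.mem_inter_iff, Set.mem_empty_iff_false, iff_false, not_and]
  intro hxG hxd
  obtain ⟨r, hr0, hrball⟩ := Metric.isOpen_iff.mp hG x hxG
  have hrB : ∀ b ∈ B, r ≤ dist x b := by
    intro b hb
    by_contra h
    push_neg at h
    have : b ∈ G := hrball (by simpa [Metric.mem_ball, dist_comm] using h)
    rw [hB] at hb; exact hb.2 this
  obtain ⟨N, hN⟩ : ∃ N : ℕ, (1 : ℝ) / 2 ^ N < r / 2 := by
    obtain ⟨N, hN⟩ := exists_pow_lt_of_lt_one (half_pos hr0) (by norm_num : (1:ℝ)/2 < 1)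
    exact ⟨N, by rwa [div_pow, one_pow] at hN⟩
  set ε : ℝ := min (r / 2) (1 / 2 ^ N) with hε
  have hε0 : 0 < ε := lt_min (half_pos hr0) (by positivity)
  -- points of Z n for n ≥ N are far from x
  have hfar : ∀ n, N ≤ n → ∀ z ∈ Z n, ε ≤ dist x z := by
    intro n hn z hz
    have hzO := hZsub n hz
    rw [hO n] at hzO
    obtain ⟨b, hbB, hzb⟩ := hzO.1.2
    have h1 : (1:ℝ) / 2 ^ n ≤ 1 / 2 ^ N := by
      apply div_le_div_of_nonneg_left one_pos.le (by positivity)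
      exact pow_le_pow_right₀ (by norm_num) hn
    have : r ≤ dist x z + dist z b := (hrB b hbB).trans (dist_triangle x z b)
    have : r - 1 / 2 ^ N ≤ dist x z := by
      have := hzb.le.trans h1
      linarith
    calc ε ≤ r / 2 := min_le_left _ _
      _ ≤ dist x z := by linarith
  -- Z n ∩ ball is subsingleton for n < N
  have hsub : ∀ n, n < N → (Z n ∩ Metric.ball x ε).Subsingleton := by
    intro n hn z hz w hw
    by_contra hne
    have hsp := hZsparse n z hz.1 w hw.1 hne
    have hdz := Metric.mem_ball.mp hz.2
    have hdw := Metric.mem_ball.mp hw.2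
    have h2 : (2:ℝ) * (1 / 2 ^ N) ≤ 1 / 2 ^ n := by
      rw [show (2:ℝ) * (1 / 2 ^ N) = 1 / 2 ^ N * 2 by ring]
      rw [div_mul_eq_mul_div, one_mul, div_le_div_iff₀ (by positivity) (by positivity), one_mul]
      calc (2:ℝ) * 2 ^ n = 2 ^ (n+1) := by ring
        _ ≤ 2 ^ N := pow_le_pow_right₀ (by norm_num) hn
    have hεN : ε ≤ 1 / 2 ^ N := min_le_right _ _
    have hdw' : dist x w < ε := by rwa [dist_comm] at hdw
    have : dist z w ≤ dist z x + dist x w := dist_triangle z x w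
    linarith
  -- the set near x is finite
  have hFfin : ((⋃ n, Z n) ∩ Metric.ball x ε).Finite := by
    have hss : (⋃ n, Z n) ∩ Metric.ball x ε ⊆ ⋃ n ∈ Finset.range N, (Z n ∩ Metric.ball x ε) := by
      rintro y ⟨hy1, hy2⟩
      obtain ⟨n, hn⟩ := Set.mem_iUnion.mp hy1
      rcases lt_or_ge n N with h | h
      · exact Set.mem_biUnion (Finset.mem_range.mpr h) ⟨hn, hy2⟩
      · exact absurd (Metric.mem_ball.mp hy2) (not_lt.mpr (by rw [dist_comm]; exact hfar n h y hn))
    exact Set.Finite.subset (Set.Finite.biUnion (Finset.range N).finite_toSet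
      fun n _ => (hsub n (by simpa using ‹n ∈ Finset.range N›)).finite) hss
  -- final contradiction via finiteness
  have hcl : IsClosed (((⋃ n, Z n) ∩ Metric.ball x ε) \ {x}) := (hFfin.diff).isClosed
  have hxnot : x ∉ ((⋃ n, Z n) ∩ Metric.ball x ε) \ {x} := fun h => h.2 rfl
  have hU : (((⋃ n, Z n) ∩ Metric.ball x ε) \ {x})ᶜ ∈ nhds x := hcl.isOpen_compl.mem_nhds hxnot
  rw [derivedSet, Set.mem_setOf_eq, accPt_iff_nhds] at hxd
  obtain ⟨y, ⟨hyU, hyZ⟩, hyx⟩ := hxd ((((⋃ n, Z n) ∩ Metric.ball x ε) \ {x})ᶜ ∩ Metric.ball x ε)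
    (Filter.inter_mem hU (Metric.ball_mem_nhds x hε0))
  exact hyU.1 ⟨⟨hyZ, hyU.2⟩, hyx⟩
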